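/- Let β > 0, b ∈ (0,∞), L > 0, α ≥ 0, and g_k, u_k ∈ ℝ. A real number u with |u| ≤ b is a global minimizer of u ↦ g_k·u + (L/2)(u - u_k)² + (α/2)u² + β|u|₀ over {|u| ≤ b} if and only if u ∈ H_{β/(L+α), b}((L·u_k - g_k)/(L+α)). Moreover, every such global minimizer u satisfies u = 0 or |u| ≥ σ, where σ := min(b, √(2β/(L+α))). -/

import Mathlib

/-- The "L⁰ norm" of a real number: 0 if `u = 0`, else 1. -/
noncomputable def nrm0 (u : ℝ) : ℝ := if u = 0 then 0 else 1

/-- `H_{s,b}(q)`: the set of global minimizers of `v ↦ -q·v + v²/2 + s·|v|₀`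
over `{v : |v| ≤ b}`. -/
def Hsb (s b q : ℝ) : Set ℝ :=
  {u | |u| ≤ b ∧ ∀ v : ℝ, |v| ≤ b →
        -q * u + u ^ 2 / 2 + s * nrm0 u ≤ -q * v + v ^ 2 / 2 + s * nrm0 v}

set_option maxHeartbeats 1000000 in
/-- Characterization of the proximal step: `u` (with `|u| ≤ b`) is a global minimizer of
`u ↦ g_k·u + (L/2)(u - u_k)² + (α/2)u² + β|u|₀` over `{|u| ≤ b}` iff
`u ∈ H_{β/(L+α),b}((L u_k - g_k)/(L+α))`; moreover every global minimizer `u`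
satisfies `u = 0` or `|u| ≥ σ` with `σ = min(b, √(2β/(L+α)))`. -/
theorem prox_step_characterization (β b L α gk uk u : ℝ)
    (hβ : 0 < β) (hb : 0 < b) (hL : 0 < L) (hα : 0 ≤ α) (hu : |u| ≤ b) :
    ((∀ v : ℝ, |v| ≤ b →
        gk * u + L / 2 * (u - uk) ^ 2 + α / 2 * u ^ 2 + β * nrm0 u ≤
          gk * v + L / 2 * (v - uk) ^ 2 + α / 2 * v ^ 2 + β * nrm0 v) ↔
      u ∈ Hsb (β / (L + α)) b ((L * uk - gk) / (L + α))) ∧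
    ((∀ v : ℝ, |v| ≤ b →
        gk * u + L / 2 * (u - uk) ^ 2 + α / 2 * u ^ 2 + β * nrm0 u ≤
          gk * v + L / 2 * (v - uk) ^ 2 + α / 2 * v ^ 2 + β * nrm0 v) →
      u = 0 ∨ min b (Real.sqrt (2 * β / (L + α))) ≤ |u|) := by
  have hc0 : (0:ℝ) < L + α := by linarith
  have hcne : (L + α) ≠ 0 := ne_of_gt hc0
  -- key identity: F v = (L+α) * G v + L/2 * uk^2
  have key : ∀ v : ℝ,
      gk * v + L / 2 * (v - uk) ^ 2 + α / 2 * v ^ 2 + β * nrm0 v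
        = (L + α) * (-((L * uk - gk) / (L + α)) * v + v ^ 2 / 2
            + (β / (L + α)) * nrm0 v) + L / 2 * uk ^ 2 := by
    intro v
    field_simp
    ring
  have hiff : ∀ w v : ℝ,
      (gk * w + L / 2 * (w - uk) ^ 2 + α / 2 * w ^ 2 + β * nrm0 w ≤
        gk * v + L / 2 * (v - uk) ^ 2 + α / 2 * v ^ 2 + β * nrm0 v) ↔
      (-((L * uk - gk) / (L + α)) * w + w ^ 2 / 2 + (β / (L + α)) * nrm0 w ≤
        -((L * uk - gk) / (L + α)) * v + v ^ 2 / 2 + (β / (L + α)) * nrm0 v) := by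
    intro w v
    rw [key w, key v, add_le_add_iff_right, mul_le_mul_iff_right₀ hc0]
  constructor
  · constructor
    · intro h
      exact ⟨hu, fun v hv => (hiff u v).mp (h v hv)⟩
    · intro h v hv
      exact (hiff u v).mpr (h.2 v hv)
  · intro h
    by_cases h0 : u = 0
    · exact Or.inl h0
    right
    by_contra hlt
    push_neg at hlt
    set m := min b (Real.sqrt (2 * β / (L + α))) with hm
    have hmb : m ≤ b := min_le_left _ _
    have hms : m ≤ Real.sqrt (2 * β / (L + α)) := min_le_right _ _
    clear_value m
    have hua : 0 < |u| := abs_pos.mpr h0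
    have hm0 : 0 < m := lt_trans hua hlt
    have hm2 : m ^ 2 ≤ 2 * β / (L + α) := by
      have := Real.sq_sqrt (by positivity : (0:ℝ) ≤ 2 * β / (L + α))
      nlinarith [Real.sqrt_nonneg (2 * β / (L + α))]
    have hm2' : (L + α) * m ^ 2 ≤ 2 * β := by
      rw [le_div_iff₀ hc0] at hm2
      nlinarith
    -- compare with v = 0
    have h1 := h 0 (by simpa using hb.le)
    simp only [nrm0, if_pos rfl, if_neg h0] at h1
    norm_num at h1
    -- compare with v = sign(u) * m
    rcases lt_or_gt_of_ne (show u ≠ 0 from h0) with hneg | hpos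
    · have hau : |u| = -u := abs_of_neg hneg
      have h2 := h (-m) (by rw [abs_neg, abs_of_pos hm0]; exact hmb)
      simp only [nrm0, if_neg h0, if_neg (show -m ≠ 0 by intro hh; nlinarith)] at h2
      have ha0 : 0 < -u := neg_pos.mpr hneg
      have hum : -u < m := by rw [hau] at hlt; exact hlt
      have i1 : (L + α) / 2 * (-u) ^ 2 + β ≤ -(L * uk - gk) * (-u) := by nlinarith [h1]
      have i2 : -(L * uk - gk) * (m - -u) ≤ (L + α) / 2 * (m ^ 2 - (-u) ^ 2) := by
        nlinarith [h2]
      have A := mul_le_mul_of_nonneg_right i1 (sub_pos.mpr hum).le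
      have B := mul_le_mul_of_nonneg_left i2 ha0.le
      have C : β * (m - -u) ≤ (L + α) / 2 * m * (-u) * (m - -u) := by linarith [A, B]
      have D : β ≤ (L + α) / 2 * m * (-u) :=
        le_of_mul_le_mul_right C (sub_pos.mpr hum)
      have E : (L + α) * m * (-u) < (L + α) * m * m :=
        mul_lt_mul_of_pos_left hum (mul_pos hc0 hm0)
      linarith [D, E, hm2']
    · have hau : |u| = u := abs_of_pos hpos
      have h2 := h m (by rw [abs_of_pos hm0]; exact hmb)
      simp only [nrm0, if_neg h0, if_neg (ne_of_gt hm0)] at h2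
      have hum : u < m := by rw [hau] at hlt; exact hlt
      have i1 : (L + α) / 2 * u ^ 2 + β ≤ (L * uk - gk) * u := by nlinarith [h1]
      have i2 : (L * uk - gk) * (m - u) ≤ (L + α) / 2 * (m ^ 2 - u ^ 2) := by
        nlinarith [h2]
      have A := mul_le_mul_of_nonneg_right i1 (sub_pos.mpr hum).le
      have B := mul_le_mul_of_nonneg_left i2 hpos.le
      have C : β * (m - u) ≤ (L + α) / 2 * m * u * (m - u) := by linarith [A, B]
      have D : β ≤ (L + α) / 2 * m * u :=
        le_of_mul_le_mul_right C (sub_pos.mpr hum)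
      have E : (L + α) * m * u < (L + α) * m * m :=
        mul_lt_mul_of_pos_left hum (mul_pos hc0 hm0)
      linarith [D, E, hm2']
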